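/- Let f : ℝ → ℝ≥0∞ be measurable. Then (volume.withDensity f).map Real.exp = volume.withDensity (fun z => if 0 < z then f (Real.log z) * ENNReal.ofReal (1 / z) else 0); that is, if x has density f with respect to Lebesgue measure then exp(x) has density z ↦ f(log z)·(1/z) for z > 0 and density 0 for z ≤ 0. -/

import Mathlib

open MeasureTheory
open scoped ENNReal

theorem density_of_exp (f : ℝ → ℝ≥0∞) (hf : Measurable f) :
    (volume.withDensity f).map Real.exp =
      volume.withDensity
        (fun z => if 0 < z then f (Real.log z) * ENNReal.ofReal (1 / z) else 0) := by
  ext s hs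
  rw [Measure.map_apply Real.measurable_exp hs,
    withDensity_apply _ (Real.measurable_exp hs), withDensity_apply _ hs]
  have h1 : ∀ z : ℝ, (if 0 < z then f (Real.log z) * ENNReal.ofReal (1 / z) else 0)
      = (Set.Ioi (0:ℝ)).indicator (fun z => f (Real.log z) * ENNReal.ofReal (1 / z)) z := by
    intro z
    by_cases h : 0 < z <;> simp [Set.indicator, h]
  simp_rw [h1]
  rw [lintegral_indicator measurableSet_Ioi]
  have h2 : (Set.Ioi 0 ∩ s) = Real.exp '' (Real.exp ⁻¹' s) := by
    rw [Set.image_preimage_eq_inter_range, Real.range_exp, Set.inter_comm]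
  rw [Measure.restrict_restrict measurableSet_Ioi, h2,
    lintegral_image_eq_lintegral_abs_det_fderiv_mul volume (Real.measurable_exp hs)
      (fun x _ => (Real.hasDerivAt_exp x).hasDerivWithinAt.hasFDerivWithinAt)
      (Real.exp_injective.injOn) _]
  simp_rw [ContinuousLinearMap.det_toSpanSingleton]
  refine (setLIntegral_congr_fun (Real.measurable_exp hs) (fun x _ => ?_)).symm
  have he : (0:ℝ) < Real.exp x := Real.exp_pos x
  rw [Real.log_exp, abs_of_pos he, mul_comm, mul_assoc,
    ← ENNReal.ofReal_mul (by positivity), one_div, inv_mul_cancel₀ he.ne',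
    ENNReal.ofReal_one, mul_one]
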